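/- Contrapositive locking-sequence construction: Let S ⊆ ℕ be infinite and M a function from finite sequences over ℕ to ℕ. If there exists a finite sequence σ with range ⊆ S such that every finite extension σ' of σ with range ⊆ S admits a further extension τ with range ⊆ S and M(τ) ≠ M(σ'), then there exists a function f : ℕ → ℕ with range exactly S such that n ↦ M(f↾n) does not converge (is not eventually constant). -/

import Mathlib

/-- The first `n` values of `f` as a list (`f↾n`). -/
def initSeg (f : ℕ → ℕ) (n : ℕ) : List ℕ := (List.range n).map f

private lemma append_mem (S : Set ℕ) (e : ℕ → ℕ) (he : ∀ n, e n ∈ S)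
    {l : List ℕ} (hl : ∀ x ∈ l, x ∈ S) (n : ℕ) :
    ∀ x ∈ l ++ [e n], x ∈ S := by
  intro x hx
  rcases List.mem_append.1 hx with hx | hx
  · exact hl x hx
  · simp at hx; subst hx; exact he n

/-- The chain of finite sequences. -/
noncomputable def chain (S : Set ℕ) (M : List ℕ → ℕ) (σ : List ℕ) (e : ℕ → ℕ)
    (hσ : ∀ x ∈ σ, x ∈ S) (he : ∀ n, e n ∈ S)
    (h : ∀ σ' : List ℕ, σ <+: σ' → (∀ x ∈ σ', x ∈ S) →
      ∃ τ : List ℕ, σ' <+: τ ∧ (∀ x ∈ τ, x ∈ S) ∧ M τ ≠ M σ') :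
    ℕ → {l : List ℕ // σ <+: l ∧ ∀ x ∈ l, x ∈ S}
  | 0 => ⟨σ, List.prefix_refl σ, hσ⟩
  | (n+1) =>
    let prev := chain S M σ e hσ he h n
    let A := prev.1 ++ [e n]
    have hA1 : σ <+: A := prev.2.1.trans (prev.1.prefix_append [e n])
    have hA2 : ∀ x ∈ A, x ∈ S := append_mem S e he prev.2.2 n
    ⟨(h A hA1 hA2).choose, hA1.trans (h A hA1 hA2).choose_spec.1,
      (h A hA1 hA2).choose_spec.2.1⟩

private lemma chain_step (S : Set ℕ) (M : List ℕ → ℕ) (σ : List ℕ) (e : ℕ → ℕ)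
    (hσ : ∀ x ∈ σ, x ∈ S) (he : ∀ n, e n ∈ S)
    (h : ∀ σ' : List ℕ, σ <+: σ' → (∀ x ∈ σ', x ∈ S) →
      ∃ τ : List ℕ, σ' <+: τ ∧ (∀ x ∈ τ, x ∈ S) ∧ M τ ≠ M σ') (n : ℕ) :
    ((chain S M σ e hσ he h n).1 ++ [e n]) <+: (chain S M σ e hσ he h (n+1)).1 ∧
      M (chain S M σ e hσ he h (n+1)).1 ≠ M ((chain S M σ e hσ he h n).1 ++ [e n]) := by
  have hA1 : σ <+: ((chain S M σ e hσ he h n).1 ++ [e n]) :=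
    (chain S M σ e hσ he h n).2.1.trans (List.prefix_append _ _)
  have hA2 : ∀ x ∈ ((chain S M σ e hσ he h n).1 ++ [e n]), x ∈ S :=
    append_mem S e he (chain S M σ e hσ he h n).2.2 n
  have hspec := (h _ hA1 hA2).choose_spec
  exact ⟨hspec.1, hspec.2.2⟩

private lemma chain_mono (S : Set ℕ) (M : List ℕ → ℕ) (σ : List ℕ) (e : ℕ → ℕ)
    (hσ : ∀ x ∈ σ, x ∈ S) (he : ∀ n, e n ∈ S)
    (h : ∀ σ' : List ℕ, σ <+: σ' → (∀ x ∈ σ', x ∈ S) →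
      ∃ τ : List ℕ, σ' <+: τ ∧ (∀ x ∈ τ, x ∈ S) ∧ M τ ≠ M σ')
    {a b : ℕ} (hab : a ≤ b) :
    (chain S M σ e hσ he h a).1 <+: (chain S M σ e hσ he h b).1 := by
  induction b with
  | zero =>
    have : a = 0 := Nat.le_zero.1 hab
    subst this; exact List.prefix_refl _
  | succ b ih =>
    rcases Nat.lt_or_ge a (b+1) with hlt | hge
    · exact ((ih (Nat.lt_succ_iff.1 hlt)).trans
        ((chain S M σ e hσ he h b).1.prefix_append [e b])).trans
        (chain_step S M σ e hσ he h b).1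
    · have : a = b + 1 := le_antisymm hab hge
      subst this; exact List.prefix_refl _

private lemma chain_len (S : Set ℕ) (M : List ℕ → ℕ) (σ : List ℕ) (e : ℕ → ℕ)
    (hσ : ∀ x ∈ σ, x ∈ S) (he : ∀ n, e n ∈ S)
    (h : ∀ σ' : List ℕ, σ <+: σ' → (∀ x ∈ σ', x ∈ S) →
      ∃ τ : List ℕ, σ' <+: τ ∧ (∀ x ∈ τ, x ∈ S) ∧ M τ ≠ M σ') (n : ℕ) :
    n ≤ (chain S M σ e hσ he h n).1.length := by
  induction n with
  | zero => exact Nat.zero_le _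
  | succ n ih =>
    have h1 := (chain_step S M σ e hσ he h n).1.length_le
    simp only [List.length_append, List.length_singleton] at h1
    omega

theorem locking_sequence_contrapositive (S : Set ℕ) (hS : S.Infinite)
    (M : List ℕ → ℕ) (σ : List ℕ) (hσ : ∀ x ∈ σ, x ∈ S)
    (h : ∀ σ' : List ℕ, σ <+: σ' → (∀ x ∈ σ', x ∈ S) →
      ∃ τ : List ℕ, σ' <+: τ ∧ (∀ x ∈ τ, x ∈ S) ∧ M τ ≠ M σ') :
    ∃ f : ℕ → ℕ, Set.range f = S ∧
      ¬ ∃ (N : ℕ) (c : ℕ), ∀ n ≥ N, M (initSeg f n) = c := by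
  obtain ⟨e, hrange⟩ := S.to_countable.exists_eq_range hS.nonempty
  have he : ∀ n, e n ∈ S := by intro n; rw [hrange]; exact ⟨n, rfl⟩
  set C := chain S M σ e hσ he h with hC
  set f : ℕ → ℕ := fun k => ((C (k+1)).1).getD k 0 with hf
  have len : ∀ n, n ≤ (C n).1.length := chain_len S M σ e hσ he h
  have mono : ∀ {a b : ℕ}, a ≤ b → (C a).1 <+: (C b).1 :=
    fun hab => chain_mono S M σ e hσ he h hab
  have step := chain_step S M σ e hσ he h
  have fval : ∀ (m k : ℕ) (hk : k < (C m).1.length), f k = (C m).1[k] := by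
    intro m k hk
    have hk1 : k < (C (k+1)).1.length := lt_of_lt_of_le (Nat.lt_succ_self k) (len (k+1))
    have hfk : f k = (C (k+1)).1[k] := List.getD_eq_getElem _ _ hk1
    rw [hfk]
    rcases Nat.le_total (k+1) m with hle | hle
    · exact (mono hle).getElem hk1
    · exact ((mono hle).getElem hk).symm
  have initseg : ∀ (m : ℕ) (l : List ℕ), l <+: (C m).1 → initSeg f l.length = l := by
    intro m l hl
    apply List.ext_getElem
    · simp [initSeg]
    · intro i h1 h2
      simp only [initSeg, List.getElem_map, List.getElem_range]
      have hi : i < (C m).1.length := lt_of_lt_of_le h2 hl.length_le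
      rw [fval m i hi, hl.getElem h2]
  refine ⟨f, ?_, ?_⟩
  · apply Set.eq_of_subset_of_subset
    · rintro x ⟨k, rfl⟩
      have hk1 : k < (C (k+1)).1.length := lt_of_lt_of_le (Nat.lt_succ_self k) (len (k+1))
      have hfk : f k = (C (k+1)).1[k] := List.getD_eq_getElem _ _ hk1
      rw [hfk]
      exact (C (k+1)).2.2 _ (List.getElem_mem _)
    · rw [hrange]
      rintro x ⟨n, rfl⟩
      refine ⟨(C n).1.length, ?_⟩
      have hpre := (step n).1
      have hlen : (C n).1.length < ((C n).1 ++ [e n]).length := by simp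
      have hlen' : (C n).1.length < (C (n+1)).1.length :=
        lt_of_lt_of_le hlen hpre.length_le
      rw [fval (n+1) _ hlen', ← hpre.getElem hlen]
      exact List.getElem_concat_length rfl _
  · rintro ⟨N, c, hc⟩
    set A := (C N).1 ++ [e N] with hA
    have hApre : A <+: (C (N+1)).1 := (step N).1
    have h1 : M (initSeg f A.length) = c := by
      apply hc
      have := len N
      simp only [hA, List.length_append, List.length_singleton]
      omega
    have h2 : M (initSeg f (C (N+1)).1.length) = c := by
      apply hc
      have := len N
      have := hApre.length_le
      simp only [hA, List.length_append, List.length_singleton] at this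
      omega
    rw [initseg (N+1) A hApre] at h1
    rw [initseg (N+1) _ (List.prefix_refl _)] at h2
    exact (step N).2 (h2.trans h1.symm)
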